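/- Connectivity for lattices built from 4-loops: Let Λ be a lattice constructed by gluing 4-cycles along shared edges as in the paper (Λ_1 = C_1 a 4-cycle; Λ_l obtained from Λ_{l−1} by attaching a new 4-cycle C_l sharing at least one edge with Λ_{l−1} and at most one edge with each previous C_{l'}), with |Λ| ≥ n + 2 sites. Then the SU(n) one-hole model on Λ satisfies the connectivity condition: any two basis indices (x, α) and (x', α') with the same flavor multiplicities are connected by a sequence of elementary hole moves. -/

import Mathlib

open Finset

/-- A flavor configuration with a hole at `x`. -/
abbrev HoleConf (V : Type*) (n : ℕ) (x : V) := {z : V // z ≠ x} → Fin n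

/-- Moving the hole from `x` to `y`: the flavor at `y` is transferred to `x`. -/
def moveConf {V : Type*} [DecidableEq V] {n : ℕ} (x y : V) (hxy : x ≠ y)
    (α : HoleConf V n x) : HoleConf V n y :=
  fun z => if h : (z : V) = x then α ⟨y, Ne.symm hxy⟩ else α ⟨z, h⟩

/-- The index set of the one-hole basis `Ψ_{(x,α)}`. -/
abbrev HoleIndex (V : Type*) (n : ℕ) := Σ x : V, HoleConf V n x

/-- The numbers of fermions of each flavor in the configuration `a`. -/
def flavorCount {V : Type*} [Fintype V] [DecidableEq V] {n : ℕ}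
    (a : HoleIndex V n) : Fin n → ℕ :=
  fun β => (univ.filter (fun z : {z : V // z ≠ a.1} => a.2 z = β)).card

/-- The edges of the 4-loop with (cyclically ordered) vertices `c 0, …, c 3`. -/
def cycEdges {V : Type*} (c : Fin 4 → V) : Set (Sym2 V) :=
  {e | ∃ i : Fin 4, e = s(c i, c (i + 1))}


namespace FourLoop

variable {V : Type*} [DecidableEq V]

/-- explicit 3-cycle `a ↦ b ↦ c ↦ a`. -/
def cyc (a b c : V) : Equiv.Perm V := Equiv.swap a b * Equiv.swap b c

variable {a b c : V}

lemma cyc_a (hab : a ≠ b) (hac : a ≠ c) : cyc a b c a = b := by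
  simp [cyc, Equiv.swap_apply_of_ne_of_ne hab hac]

lemma cyc_b (hac : a ≠ c) (hbc : b ≠ c) : cyc a b c b = c := by
  simp [cyc, Equiv.swap_apply_of_ne_of_ne (Ne.symm hac) (Ne.symm hbc)]

lemma cyc_c : cyc a b c c = a := by
  simp [cyc]

lemma cyc_other {z : V} (hza : z ≠ a) (hzb : z ≠ b) (hzc : z ≠ c) : cyc a b c z = z := by
  simp [cyc, Equiv.swap_apply_of_ne_of_ne hzb hzc, Equiv.swap_apply_of_ne_of_ne hza hzb]

lemma cyc_rot (hab : a ≠ b) (hac : a ≠ c) (hbc : b ≠ c) : cyc a b c = cyc b c a := by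
  apply Equiv.ext; intro z
  by_cases hza : z = a
  · subst hza; rw [cyc_a hab hac, cyc_c]
  by_cases hzb : z = b
  · subst hzb; rw [cyc_b hac hbc, cyc_a hbc (Ne.symm hab)]
  by_cases hzc : z = c
  · subst hzc; rw [cyc_c, cyc_b (Ne.symm hab) (Ne.symm hac)]
  · rw [cyc_other hza hzb hzc, cyc_other hzb hzc hza]

lemma cyc_inv (hab : a ≠ b) (hac : a ≠ c) (hbc : b ≠ c) : (cyc a b c)⁻¹ = cyc b a c := by
  rw [inv_eq_iff_mul_eq_one]
  apply Equiv.ext; intro z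
  simp only [Equiv.Perm.mul_apply, Equiv.Perm.one_apply]
  by_cases hza : z = a
  · subst hza; rw [cyc_b hbc hac, cyc_c]
  by_cases hzb : z = b
  · subst hzb; rw [cyc_a (Ne.symm hab) hbc, cyc_a hab hac]
  by_cases hzc : z = c
  · subst hzc; rw [cyc_c, cyc_b hac hbc]
  · rw [cyc_other hzb hza hzc, cyc_other hza hzb hzc]

lemma cyc_conj (π : Equiv.Perm V) :
    π * cyc a b c * π⁻¹ = cyc (π a) (π b) (π c) := by
  rw [cyc, cyc, Equiv.swap_apply_apply, Equiv.swap_apply_apply]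
  group

end FourLoop

namespace FourLoop

variable {V : Type*} [DecidableEq V]

lemma gen1 (H : Subgroup (Equiv.Perm V)) (O : Set V) (q : V) (hq : q ∉ O)
    (hK : ∀ a b c, a ∈ O → b ∈ O → c ∈ O → a ≠ b → a ≠ c → b ≠ c → cyc a b c ∈ H)
    (a0 b0 : V) (ha0 : a0 ∈ O) (hb0 : b0 ∈ O) (h00 : a0 ≠ b0)
    (h0 : cyc a0 b0 q ∈ H) :
    ∀ a b c, a ∈ O ∪ {q} → b ∈ O ∪ {q} → c ∈ O ∪ {q} →
      a ≠ b → a ≠ c → b ≠ c → cyc a b c ∈ H := by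
  have hne : ∀ {z : V}, z ∈ O → z ≠ q := fun hz h => hq (h ▸ hz)
  have flip : ∀ a b, a ∈ O → b ∈ O → a ≠ b → cyc a b q ∈ H → cyc b a q ∈ H := by
    intro a b ha hb hab h
    rw [← cyc_inv hab (hne ha) (hne hb)]
    exact H.inv_mem h
  have conjstep : ∀ a b u v w, cyc a b q ∈ H → u ∈ O → v ∈ O → w ∈ O →
      u ≠ v → u ≠ w → v ≠ w → cyc (cyc u v w a) (cyc u v w b) q ∈ H := by
    intro a b u v w h hu hv hw huv huw hvw
    have hρ := hK u v w hu hv hw huv huw hvw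
    have h2 := H.mul_mem (H.mul_mem hρ h) (H.inv_mem hρ)
    rwa [cyc_conj, cyc_other (Ne.symm (hne hu)) (Ne.symm (hne hv)) (Ne.symm (hne hw))] at h2
  have p1 : ∀ x y t, x ∈ O → y ∈ O → t ∈ O → x ≠ y → x ≠ t → y ≠ t →
      cyc x y q ∈ H → cyc y t q ∈ H := by
    intro x y t hx hy ht hxy hxt hyt h
    have h2 := conjstep x y x y t h hx hy ht hxy hxt hyt
    rwa [cyc_a hxy hxt, cyc_b hxt hyt] at h2
  have p2 : ∀ x y t, x ∈ O → y ∈ O → t ∈ O → x ≠ y → x ≠ t → y ≠ t →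
      cyc x y q ∈ H → cyc t x q ∈ H := by
    intro x y t hx hy ht hxy hxt hyt h
    exact p1 y t x hy ht hx hyt (Ne.symm hxy) (Ne.symm hxt) (p1 x y t hx hy ht hxy hxt hyt h)
  have pair : ∀ a b, a ∈ O → b ∈ O → a ≠ b → cyc a b q ∈ H := by
    intro a b ha hb hab
    by_cases h1 : a = a0
    · rw [h1]; rw [h1] at hab
      by_cases h2 : b = b0
      · rw [h2]; exact h0
      · exact flip b a0 hb ha0 (Ne.symm hab)
          (p2 a0 b0 b ha0 hb0 hb h00 hab (fun h => h2 h.symm) h0)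
    by_cases h1' : a = b0
    · rw [h1']; rw [h1'] at hab
      by_cases h2 : b = a0
      · rw [h2]; exact flip a0 b0 ha0 hb0 h00 h0
      · exact p1 a0 b0 b ha0 hb0 hb h00 (fun h => h2 h.symm) hab h0
    · by_cases h2 : b = a0
      · rw [h2]
        exact p2 a0 b0 a ha0 hb0 ha h00 (fun h => h1 h.symm) (fun h => h1' h.symm) h0
      by_cases h3 : b = b0
      · rw [h3]
        exact p2 b0 a0 a hb0 ha0 ha (Ne.symm h00) (fun h => h1' h.symm)
          (fun h => h1 h.symm) (flip a0 b0 ha0 hb0 h00 h0)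
      · have c1 := p2 a0 b0 a ha0 hb0 ha h00 (fun h => h1 h.symm) (fun h => h1' h.symm) h0
        have c2 := conjstep a a0 a0 b b0 c1 ha0 hb hb0 (fun h => h2 h.symm) h00 h3
        rwa [cyc_other h1 hab h1', cyc_a (fun h => h2 h.symm) h00] at c2
  intro a b c hA hB hC hab hac hbc
  have hmem : ∀ {z : V}, z ∈ O ∪ {q} → z ≠ q → z ∈ O := by
    intro z hz hzq; rcases hz with h | h
    · exact h
    · exact absurd (by simpa using h) hzq
  by_cases hA' : a = q
  · subst hA'
    have hb' := hmem hB (Ne.symm hab)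
    have hc' := hmem hC (Ne.symm hac)
    rw [cyc_rot hab hac hbc]
    exact pair b c hb' hc' hbc
  by_cases hB' : b = q
  · subst hB'
    have ha' := hmem hA hab
    have hc' := hmem hC (Ne.symm hbc)
    rw [cyc_rot hab hac hbc, cyc_rot hbc (Ne.symm hab) (Ne.symm hac)]
    exact pair c a hc' ha' (Ne.symm hac)
  by_cases hC' : c = q
  · subst hC'
    exact pair a b (hmem hA hA') (hmem hB hB') hab
  · exact hK a b c (hmem hA hA') (hmem hB hB') (hmem hC hC') hab hac hbc

end FourLoop

namespace FourLoop

variable {V : Type*} [DecidableEq V]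

lemma gen (H : Subgroup (Equiv.Perm V)) (O : Set V) (v p q : V)
    (hv : v ∈ O) (hvp : v ≠ p) (hvq : v ≠ q) (hpq : p ≠ q)
    (hO3 : ∀ s t : V, ∃ w, w ∈ O ∧ w ≠ s ∧ w ≠ t)
    (hK : ∀ a b c, a ∈ O → b ∈ O → c ∈ O → a ≠ b → a ≠ c → b ≠ c → cyc a b c ∈ H)
    (h0 : cyc v p q ∈ H) :
    ∀ a b c, a ∈ O ∪ {p, q} → b ∈ O ∪ {p, q} → c ∈ O ∪ {p, q} →
      a ≠ b → a ≠ c → b ≠ c → cyc a b c ∈ H := by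
  by_cases hpO : p ∈ O
  · by_cases hqO : q ∈ O
    · intro a b c hA hB hC hab hac hbc
      have hm : ∀ {z : V}, z ∈ O ∪ {p, q} → z ∈ O := by
        intro z hz
        rcases hz with h | h
        · exact h
        · rcases h with h | h
          · simpa [h] using hpO
          · simp only [Set.mem_singleton_iff] at h; simpa [h] using hqO
      exact hK a b c (hm hA) (hm hB) (hm hC) hab hac hbc
    · have key := gen1 H O q hqO hK v p hv hpO hvp h0
      intro a b c hA hB hC hab hac hbc
      have hm : ∀ {z : V}, z ∈ O ∪ {p, q} → z ∈ O ∪ {q} := by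
        intro z hz
        rcases hz with h | h
        · exact Or.inl h
        · rcases h with h | h
          · exact Or.inl (h ▸ hpO)
          · exact Or.inr h
      exact key a b c (hm hA) (hm hB) (hm hC) hab hac hbc
  · by_cases hqO : q ∈ O
    · -- q old, p new: cyc v p q = cyc q v p
      have h0' : cyc q v p ∈ H := by
        rw [cyc_rot (Ne.symm hvq) (Ne.symm hpq) hvp]; exact h0
      have key := gen1 H O p hpO hK q v hqO hv (Ne.symm hvq) h0'
      intro a b c hA hB hC hab hac hbc
      have hm : ∀ {z : V}, z ∈ O ∪ {p, q} → z ∈ O ∪ {p} := by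
        intro z hz
        rcases hz with h | h
        · exact Or.inl h
        · rcases h with h | h
          · exact Or.inr h
          · simp only [Set.mem_singleton_iff] at h; exact Or.inl (h ▸ hqO)
      exact key a b c (hm hA) (hm hB) (hm hC) hab hac hbc
    · -- both new
      obtain ⟨w, hw, hwv, -⟩ := hO3 v v
      have hwp : w ≠ p := fun h => hpO (h ▸ hw)
      have hwq : w ≠ q := fun h => hqO (h ▸ hw)
      have hvp' : v ≠ p := hvp
      obtain ⟨z, hz, hzv, hzw⟩ := hO3 v w
      have hρ : cyc v w z ∈ H := hK v w z hv hw hz (Ne.symm hwv) (Ne.symm hzv) (Ne.symm hzw)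
      have hzp : z ≠ p := fun h => hpO (h ▸ hz)
      have hzq : z ≠ q := fun h => hqO (h ▸ hz)
      -- c1 = conj h0 by ρ = cyc v w z : cyc w p q
      have c1 : cyc w p q ∈ H := by
        have h2 := H.mul_mem (H.mul_mem hρ h0) (H.inv_mem hρ)
        rwa [cyc_conj, cyc_a (Ne.symm hwv) (Ne.symm hzv),
          cyc_other (Ne.symm hvp) (Ne.symm hwp) (Ne.symm hzp),
          cyc_other (Ne.symm hvq) (Ne.symm hwq) (Ne.symm hzq)] at h2
      -- c2 = conj h0 by c1 : cyc v q w
      have c2 : cyc v q w ∈ H := by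
        have h2 := H.mul_mem (H.mul_mem c1 h0) (H.inv_mem c1)
        rwa [cyc_conj, cyc_other (Ne.symm hwv) hvp hvq, cyc_b hwq hpq, cyc_c] at h2
      have c2' : cyc w v q ∈ H := by
        rw [cyc_rot hwv hwq hvq]; exact c2
      have key1 := gen1 H O q hqO hK w v hw hv hwv c2'
      have hp' : p ∉ O ∪ {q} := by
        rintro (h | h)
        · exact hpO h
        · exact hpq (by simpa using h)
      have h0'' : cyc q v p ∈ H := by
        rw [cyc_rot (Ne.symm hvq) (Ne.symm hpq) hvp]; exact h0
      have key2 := gen1 H (O ∪ {q}) p hp' key1 q v (Or.inr rfl) (Or.inl hv)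
        (Ne.symm hvq) h0''
      intro a b c hA hB hC hab hac hbc
      have hm : ∀ {z : V}, z ∈ O ∪ {p, q} → z ∈ (O ∪ {q}) ∪ {p} := by
        intro z hz
        rcases hz with h | h
        · exact Or.inl (Or.inl h)
        · rcases h with h | h
          · exact Or.inr h
          · exact Or.inl (Or.inr h)
      exact key2 a b c (hm hA) (hm hB) (hm hC) hab hac hbc

end FourLoop


namespace FourLoop

variable {V : Type*} [DecidableEq V] (G : SimpleGraph V) (n : ℕ)

/-- One hole move in the total model: the state is (hole, total flavor function);
the junk value at the hole travels with the hole. -/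
def tstep : (V × (V → Fin n)) → (V × (V → Fin n)) → Prop :=
  fun s t => ∃ _ : G.Adj s.1 t.1, t.2 = s.2 ∘ ⇑(Equiv.swap s.1 t.1)

/-- Reachability in the total model. -/
def ReachT : (V × (V → Fin n)) → (V × (V → Fin n)) → Prop :=
  Relation.ReflTransGen (tstep G n)

variable {G n}

lemma tstep_symm : Symmetric (tstep G n) := by
  rintro ⟨x, f⟩ ⟨y, g⟩ ⟨h, hg⟩
  refine ⟨h.symm, ?_⟩
  rw [hg]
  funext z
  simp [Equiv.swap_comm x y]

lemma ReachT.symm {s t : V × (V → Fin n)} (h : ReachT G n s t) : ReachT G n t s :=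
  by
    haveI : Std.Symm (tstep G n) := ⟨fun _ _ h => tstep_symm h⟩
    exact Std.Symm.symm (r := Relation.ReflTransGen (tstep G n)) _ _ h

lemma ReachT.trans {s t u : V × (V → Fin n)} (h : ReachT G n s t)
    (h' : ReachT G n t u) : ReachT G n s u :=
  Relation.ReflTransGen.trans h h'

lemma reachT_move {x y : V} (h : G.Adj x y) (f : V → Fin n) :
    ReachT G n (x, f) (y, f ∘ ⇑(Equiv.swap x y)) :=
  Relation.ReflTransGen.single ⟨h, rfl⟩

variable (G n) in
/-- The permutations realizable with hole resting at `x`. -/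
def avail (x : V) : Subgroup (Equiv.Perm V) where
  carrier := {π | ∀ f : V → Fin n, ReachT G n (x, f) (x, f ∘ ⇑π)}
  one_mem' := by intro f; exact Relation.ReflTransGen.refl
  mul_mem' := by
    intro π ρ hπ hρ f
    exact (hπ f).trans (hρ (f ∘ ⇑π))
  inv_mem' := by
    intro π hπ f
    have := (hπ (f ∘ ⇑π⁻¹)).symm
    simpa [Function.comp_def] using this

lemma avail_conj {x y : V} (h : G.Adj x y) {π : Equiv.Perm V}
    (hπ : π ∈ avail G n x) :
    Equiv.swap x y * π * Equiv.swap x y ∈ avail G n y := by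
  intro f
  have h1 := reachT_move h.symm f
  have h2 := hπ (f ∘ ⇑(Equiv.swap y x))
  have h3 := reachT_move h ((f ∘ ⇑(Equiv.swap y x)) ∘ ⇑π)
  have h4 := (h1.trans h2).trans h3
  have : ((f ∘ ⇑(Equiv.swap y x)) ∘ ⇑π) ∘ ⇑(Equiv.swap x y)
      = f ∘ ⇑(Equiv.swap x y * π * Equiv.swap x y) := by
    funext z
    simp [Equiv.swap_comm x y, Function.comp]
  rwa [this] at h4

lemma loop_perm {d0 d1 d2 d3 : V} (h01 : d0 ≠ d1) (h02 : d0 ≠ d2) (h03 : d0 ≠ d3)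
    (h12 : d1 ≠ d2) (h13 : d1 ≠ d3) (h23 : d2 ≠ d3) :
    Equiv.swap d0 d1 * Equiv.swap d1 d2 * (Equiv.swap d2 d3 * Equiv.swap d3 d0)
      = cyc d1 d2 d3 := by
  show cyc d0 d1 d2 * cyc d2 d3 d0 = _
  apply Equiv.ext; intro z
  simp only [Equiv.Perm.mul_apply]
  by_cases hz0 : z = d0
  · subst hz0
    rw [cyc_c, cyc_c, cyc_other h01 h02 h03]
  by_cases hz1 : z = d1
  · subst hz1
    rw [cyc_other h12 h13 (Ne.symm h01), cyc_b h02 h12, cyc_a h12 h13]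
  by_cases hz2 : z = d2
  · subst hz2
    rw [cyc_a h23 (Ne.symm h02), cyc_other (Ne.symm h03) (Ne.symm h13) (Ne.symm h23),
      cyc_b h13 h23]
  by_cases hz3 : z = d3
  · subst hz3
    rw [cyc_b (Ne.symm h02) (Ne.symm h03), cyc_a h01 h02, cyc_c]
  · rw [cyc_other hz2 hz3 hz0, cyc_other hz0 hz1 hz2, cyc_other hz1 hz2 hz3]

lemma plaquette {c : Fin 4 → V} (hc : Function.Injective c)
    (hadjc : ∀ i : Fin 4, G.Adj (c i) (c (i + 1))) :
    cyc (c 1) (c 2) (c 3) ∈ avail G n (c 0) := by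
  have hne : ∀ i j : Fin 4, i ≠ j → c i ≠ c j := fun i j hij h => hij (hc h)
  intro f
  have m1 := reachT_move (hadjc 0) f
  have m2 := reachT_move (hadjc 1) (f ∘ ⇑(Equiv.swap (c 0) (c 1)))
  have m3 := reachT_move (hadjc 2) ((f ∘ ⇑(Equiv.swap (c 0) (c 1))) ∘ ⇑(Equiv.swap (c 1) (c 2)))
  have m4 := reachT_move (hadjc 3)
    (((f ∘ ⇑(Equiv.swap (c 0) (c 1))) ∘ ⇑(Equiv.swap (c 1) (c 2))) ∘ ⇑(Equiv.swap (c 2) (c 3)))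
  have h4 : (4 : Fin 4) = 0 := rfl
  rw [show ((3 : Fin 4) + 1) = 0 from rfl] at m4
  rw [show ((0 : Fin 4) + 1) = 1 from rfl] at m1
  rw [show ((1 : Fin 4) + 1) = 2 from rfl] at m2
  rw [show ((2 : Fin 4) + 1) = 3 from rfl] at m3
  have h5 := ((m1.trans m2).trans m3).trans m4
  have heq : (((f ∘ ⇑(Equiv.swap (c 0) (c 1))) ∘ ⇑(Equiv.swap (c 1) (c 2)))
        ∘ ⇑(Equiv.swap (c 2) (c 3))) ∘ ⇑(Equiv.swap (c 3) (c 0))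
      = f ∘ ⇑(cyc (c 1) (c 2) (c 3)) := by
    rw [← loop_perm (hne 0 1 (by decide)) (hne 0 2 (by decide)) (hne 0 3 (by decide))
      (hne 1 2 (by decide)) (hne 1 3 (by decide)) (hne 2 3 (by decide))]
    funext z
    simp [Function.comp]
  rwa [heq] at h5

end FourLoop

namespace FourLoop

variable {V : Type*} [DecidableEq V] {G : SimpleGraph V} {n : ℕ}

variable (G n) in
/-- All 3-cycles on `S \ {x}` are realizable with the hole at `x`. -/
def FullAt (S : Set V) (x : V) : Prop :=
  ∀ a b c : V, a ∈ S → b ∈ S → c ∈ S → a ≠ x → b ≠ x → c ≠ x →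
    a ≠ b → a ≠ c → b ≠ c → cyc a b c ∈ avail G n x

lemma fullAt_step {S : Set V} {x y : V} (hxy : G.Adj x y) (hx : x ∈ S) (hy : y ∈ S)
    (hF : FullAt G n S y) : FullAt G n S x := by
  intro a b c hma hmb hmc hax hbx hcx hab hac hbc
  set s : Equiv.Perm V := Equiv.swap x y with hs
  have hmem : ∀ {z : V}, z ∈ S → z ≠ x → (s z ∈ S ∧ s z ≠ y) := by
    intro z hz hzx
    by_cases hzy : z = y
    · subst hzy
      rw [hs, Equiv.swap_apply_right]
      exact ⟨hx, hxy.ne⟩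
    · rw [hs, Equiv.swap_apply_of_ne_of_ne hzx hzy]
      exact ⟨hz, hzy⟩
  have hinj : ∀ {p q : V}, p ≠ q → s p ≠ s q := fun {p q} h => (Equiv.injective s).ne h
  have h1 := hF (s a) (s b) (s c) (hmem hma hax).1 (hmem hmb hbx).1 (hmem hmc hcx).1
    (hmem hma hax).2 (hmem hmb hbx).2 (hmem hmc hcx).2
    (hinj hab) (hinj hac) (hinj hbc)
  have h2 := avail_conj hxy.symm h1
  have key : Equiv.swap y x * cyc (s a) (s b) (s c) * Equiv.swap y x = cyc a b c := by
    rw [Equiv.swap_comm y x,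
      show Equiv.swap x y * cyc (s a) (s b) (s c) * Equiv.swap x y
        = Equiv.swap x y * cyc (s a) (s b) (s c) * (Equiv.swap x y)⁻¹ by
          rw [Equiv.swap_inv],
      cyc_conj]
    simp [hs, Equiv.swap_apply_self]
  rwa [key] at h2

lemma fullAt_walk {S : Set V} {x y : V}
    (hw : Relation.ReflTransGen (fun u w => G.Adj u w ∧ u ∈ S ∧ w ∈ S) x y)
    (hF : FullAt G n S x) : FullAt G n S y := by
  induction hw with
  | refl => exact hF
  | tail _ h ih => exact fullAt_step h.1.symm h.2.2 h.2.1 ih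

lemma cyc_cases {x y z a b c : V} (hxy : x ≠ y) (hxz : x ≠ z) (hyz : y ≠ z)
    (ha : a = x ∨ a = y ∨ a = z) (hb : b = x ∨ b = y ∨ b = z)
    (hc : c = x ∨ c = y ∨ c = z)
    (hab : a ≠ b) (hac : a ≠ c) (hbc : b ≠ c) :
    cyc a b c = cyc x y z ∨ cyc a b c = cyc y x z := by
  rcases ha with rfl | rfl | rfl <;> rcases hb with rfl | rfl | rfl <;>
    rcases hc with rfl | rfl | rfl <;>
    first
      | exact absurd rfl hab
      | exact absurd rfl hac
      | exact absurd rfl hbc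
      | exact Or.inl rfl
      | exact Or.inr rfl
      | exact Or.inl (cyc_rot hxy hxz hyz).symm
      | exact Or.inl (cyc_rot (Ne.symm hxz) (Ne.symm hyz) hxy)
      | exact Or.inr (by
          rw [cyc_rot hxz hxy (Ne.symm hyz), cyc_rot (Ne.symm hyz) (Ne.symm hxz) (Ne.symm hxy)])
      | exact Or.inr (cyc_rot (Ne.symm hyz) (Ne.symm hxz) (Ne.symm hxy))

lemma pick4 {c : Fin 4 → V} (hc : Function.Injective c) (u s t : V) :
    ∃ i : Fin 4, c i ≠ u ∧ c i ≠ s ∧ c i ≠ t := by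
  by_contra h
  push_neg at h
  have hmaps : ∀ i : Fin 4, c i ∈ ({u, s, t} : Finset V) := by
    intro i
    by_cases h1 : c i = u
    · simp [h1]
    · by_cases h2 : c i = s
      · simp [h2]
      · simp [h i h1 h2]
  have hle := Finset.card_le_card_of_injOn (s := (Finset.univ : Finset (Fin 4)))
    (t := ({u, s, t} : Finset V)) c (fun i _ => hmaps i) (fun i _ j _ hij => hc hij)
  have h3 : ({u, s, t} : Finset V).card ≤ 3 := by
    apply le_trans (Finset.card_insert_le _ _)
    have := Finset.card_insert_le s ({t} : Finset V)
    simp at this ⊢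
    omega
  simp at hle
  omega

end FourLoop

namespace FourLoop

variable {V : Type*} [DecidableEq V] {G : SimpleGraph V} {n : ℕ}

lemma swap_realize {x : V}
    (hfull : ∀ a b c : V, a ≠ x → b ≠ x → c ≠ x → a ≠ b → a ≠ c → b ≠ c →
      cyc a b c ∈ avail G n x)
    (f : V → Fin n) {z w : V}
    (hz : z ≠ x) (hw : w ≠ x) (hzw : z ≠ w) (hfzw : f z ≠ f w)
    {u u' : V} (hux : u ≠ x) (hux' : u' ≠ x) (huu' : u ≠ u') (hfu : f u = f u') :
    ∃ π : Equiv.Perm V, π ∈ avail G n x ∧ ∀ t, f (π t) = f (Equiv.swap z w t) := by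
  have swz : Equiv.swap z w z = w := Equiv.swap_apply_left z w
  have sww : Equiv.swap z w w = z := Equiv.swap_apply_right z w
  have swo : ∀ {t : V}, t ≠ z → t ≠ w → Equiv.swap z w t = t :=
    fun htz htw => Equiv.swap_apply_of_ne_of_ne htz htw
  by_cases hu1 : u = z
  · have hfzu : f z = f u' := hu1 ▸ hfu
    have hu'z : u' ≠ z := fun h => huu' (hu1.trans h.symm)
    have hu'w : u' ≠ w := fun h => hfzw (hfzu.trans (congrArg f h))
    refine ⟨cyc z w u', hfull z w u' hz hw hux' hzw (Ne.symm hu'z) (Ne.symm hu'w), ?_⟩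
    intro t
    by_cases htz : t = z
    · rw [htz, swz, cyc_a hzw (Ne.symm hu'z)]
    by_cases htw : t = w
    · rw [htw, sww, cyc_b (Ne.symm hu'z) (Ne.symm hu'w)]; exact hfzu.symm
    by_cases htu : t = u'
    · rw [htu, cyc_c, swo hu'z hu'w]; exact hfzu
    · rw [cyc_other htz htw htu, swo htz htw]
  by_cases hu2 : u' = z
  · have hfzu : f z = f u := (hu2 ▸ hfu).symm
    have huz : u ≠ z := hu1
    have huw : u ≠ w := fun h => hfzw (hfzu.trans (congrArg f h))
    refine ⟨cyc z w u, hfull z w u hz hw hux hzw (Ne.symm huz) (Ne.symm huw), ?_⟩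
    intro t
    by_cases htz : t = z
    · rw [htz, swz, cyc_a hzw (Ne.symm huz)]
    by_cases htw : t = w
    · rw [htw, sww, cyc_b (Ne.symm huz) (Ne.symm huw)]; exact hfzu.symm
    by_cases htu : t = u
    · rw [htu, cyc_c, swo huz huw]; exact hfzu
    · rw [cyc_other htz htw htu, swo htz htw]
  by_cases hu3 : u = w
  · have hfwu' : f w = f u' := hu3 ▸ hfu
    have hu'z : u' ≠ z := fun h => hfzw ((congrArg f h).symm.trans hfwu'.symm)
    have hu'w : u' ≠ w := fun h => huu' (hu3.trans h.symm)
    refine ⟨cyc w z u', hfull w z u' hw hz hux' (Ne.symm hzw) (Ne.symm hu'w) (Ne.symm hu'z), ?_⟩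
    intro t
    by_cases htw : t = w
    · rw [htw, sww, cyc_a (Ne.symm hzw) (Ne.symm hu'w)]
    by_cases htz : t = z
    · rw [htz, swz, cyc_b (Ne.symm hu'w) (Ne.symm hu'z)]; exact hfwu'.symm
    by_cases htu : t = u'
    · rw [htu, cyc_c, swo hu'z hu'w]; exact hfwu'
    · rw [cyc_other htw htz htu, swo htz htw]
  by_cases hu4 : u' = w
  · have hfuw : f u = f w := hu4 ▸ hfu
    have huz : u ≠ z := fun h => hfzw ((congrArg f h).symm.trans hfuw)
    have huw : u ≠ w := fun h => huu' (h.trans hu4.symm)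
    refine ⟨cyc w z u, hfull w z u hw hz hux (Ne.symm hzw) (Ne.symm huw) (Ne.symm huz), ?_⟩
    intro t
    by_cases htw : t = w
    · rw [htw, sww, cyc_a (Ne.symm hzw) (Ne.symm huw)]
    by_cases htz : t = z
    · rw [htz, swz, cyc_b (Ne.symm huw) (Ne.symm huz)]; exact hfuw
    by_cases htu : t = u
    · rw [htu, cyc_c, swo huz huw]; exact hfuw.symm
    · rw [cyc_other htw htz htu, swo htz htw]
  · have huz : u ≠ z := hu1
    have hu'z : u' ≠ z := hu2
    have huw : u ≠ w := hu3
    have hu'w : u' ≠ w := hu4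
    refine ⟨cyc z w u * cyc w u u',
      Subgroup.mul_mem _ (hfull z w u hz hw hux hzw (Ne.symm huz) (Ne.symm huw))
        (hfull w u u' hw hux hux' (Ne.symm huw) (Ne.symm hu'w) huu'), ?_⟩
    intro t
    simp only [Equiv.Perm.mul_apply]
    by_cases htz : t = z
    · rw [htz, swz, cyc_other hzw (Ne.symm huz) (Ne.symm hu'z), cyc_a hzw (Ne.symm huz)]
    by_cases htw : t = w
    · rw [htw, sww, cyc_a (Ne.symm huw) (Ne.symm hu'w), cyc_c]
    by_cases htu : t = u
    · rw [htu, cyc_b (Ne.symm hu'w) huu', cyc_other hu'z hu'w (Ne.symm huu'),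
        swo huz huw]
      exact hfu.symm
    by_cases htu' : t = u'
    · rw [htu', cyc_c, cyc_b (Ne.symm huz) (Ne.symm huw), swo hu'z hu'w]
      exact hfu
    · rw [cyc_other htw htu htu', cyc_other htz htw htu, swo htz htw]

end FourLoop

namespace FourLoop

variable {V : Type*} [DecidableEq V] [Fintype V] {G : SimpleGraph V} {n : ℕ}

lemma card_swap_filter {x z w : V} (hzx : z ≠ x) (hwx : w ≠ x) (f : V → Fin n) (β : Fin n) :
    ((univ : Finset V).filter fun t => t ≠ x ∧ f (Equiv.swap z w t) = β).card
      = ((univ : Finset V).filter fun t => t ≠ x ∧ f t = β).card := by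
  have hswx : Equiv.swap z w x = x :=
    Equiv.swap_apply_of_ne_of_ne (Ne.symm hzx) (Ne.symm hwx)
  have hx : ∀ i : V, Equiv.swap z w i = x ↔ i = x := by
    intro i
    constructor
    · intro h; exact (Equiv.swap z w).injective (h.trans hswx.symm)
    · intro h; rw [h, hswx]
  apply Finset.card_equiv (Equiv.swap z w)
  intro i
  simp only [Finset.mem_filter, Finset.mem_univ, true_and, ne_eq, hx i]

lemma tstep_count {s t : V × (V → Fin n)} (h : tstep G n s t) (β : Fin n) :
    ((univ : Finset V).filter fun w => w ≠ s.1 ∧ s.2 w = β).card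
      = ((univ : Finset V).filter fun w => w ≠ t.1 ∧ t.2 w = β).card := by
  obtain ⟨x, f⟩ := s
  obtain ⟨y, g⟩ := t
  obtain ⟨hadj, hg⟩ := h
  simp only at hg ⊢
  subst hg
  have hxy : x ≠ y := hadj.ne
  have hswx : Equiv.swap x y x = y := Equiv.swap_apply_left x y
  have hx : ∀ i : V, Equiv.swap x y i = y ↔ i = x := by
    intro i
    constructor
    · intro h; exact (Equiv.swap x y).injective (h.trans hswx.symm)
    · intro h; rw [h, hswx]
  apply Finset.card_equiv (Equiv.swap x y)
  intro i
  simp only [Finset.mem_filter, Finset.mem_univ, true_and, ne_eq, hx i,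
    Function.comp_apply, Equiv.swap_apply_self]

lemma reachT_count {s t : V × (V → Fin n)} (h : ReachT G n s t) (β : Fin n) :
    ((univ : Finset V).filter fun w => w ≠ s.1 ∧ s.2 w = β).card
      = ((univ : Finset V).filter fun w => w ≠ t.1 ∧ t.2 w = β).card := by
  induction h with
  | refl => rfl
  | tail _ hstep ih => exact ih.trans (tstep_count hstep β)

lemma endgame {x : V}
    (hfull : ∀ a b c : V, a ≠ x → b ≠ x → c ≠ x → a ≠ b → a ≠ c → b ≠ c →
      cyc a b c ∈ avail G n x)
    (hbig : Fintype.card (Fin n) < Fintype.card {z : V // z ≠ x}) (g : V → Fin n) :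
    ∀ (k : ℕ) (f : V → Fin n),
      (∀ β, ((univ : Finset V).filter fun w => w ≠ x ∧ f w = β).card
          = ((univ : Finset V).filter fun w => w ≠ x ∧ g w = β).card) →
      ((univ : Finset V).filter fun w => w ≠ x ∧ f w ≠ g w).card ≤ k →
      ∃ g', ReachT G n (x, f) (x, g') ∧ ∀ z, z ≠ x → g' z = g z := by
  intro k
  induction k with
  | zero =>
    intro f hcount hcard
    refine ⟨f, Relation.ReflTransGen.refl, ?_⟩
    intro z hzx
    by_contra hne
    have hz : z ∈ (univ : Finset V).filter (fun w => w ≠ x ∧ f w ≠ g w) := by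
      simp [hzx, hne]
    have h0 : ((univ : Finset V).filter (fun w => w ≠ x ∧ f w ≠ g w)) = ∅ :=
      Finset.card_eq_zero.mp (Nat.le_zero.mp hcard)
    rw [h0] at hz
    exact absurd hz (Finset.notMem_empty z)
  | succ k ih =>
    intro f hcount hcard
    by_cases h0 : ((univ : Finset V).filter (fun w => w ≠ x ∧ f w ≠ g w)) = ∅
    · refine ⟨f, Relation.ReflTransGen.refl, ?_⟩
      intro z hzx
      by_contra hne
      have hz : z ∈ (univ : Finset V).filter (fun w => w ≠ x ∧ f w ≠ g w) := by
        simp [hzx, hne]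
      rw [h0] at hz
      exact absurd hz (Finset.notMem_empty z)
    · obtain ⟨z, hzmem⟩ := Finset.nonempty_iff_ne_empty.mpr h0
      rw [Finset.mem_filter] at hzmem
      obtain ⟨-, hzx, hzfg⟩ := hzmem
      have hw : ∃ w, w ≠ x ∧ f w = g z ∧ g w ≠ g z := by
        by_contra hcon
        push_neg at hcon
        have hsub : (univ : Finset V).filter (fun w => w ≠ x ∧ f w = g z)
            ⊆ (univ : Finset V).filter (fun w => w ≠ x ∧ g w = g z) := by
          intro t ht
          rw [Finset.mem_filter] at ht ⊢
          exact ⟨ht.1, ht.2.1, hcon t ht.2.1 ht.2.2⟩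
        have heq := Finset.eq_of_subset_of_card_le hsub (le_of_eq (hcount (g z)).symm)
        have hzin : z ∈ (univ : Finset V).filter (fun w => w ≠ x ∧ g w = g z) := by
          simp [hzx]
        rw [← heq, Finset.mem_filter] at hzin
        exact hzfg hzin.2.2
      obtain ⟨w, hwx, hwfz, hwgz⟩ := hw
      have hzw : z ≠ w := fun h => hzfg (h ▸ hwfz)
      have hfzw : f z ≠ f w := by rw [hwfz]; exact hzfg
      obtain ⟨u, u', hneuu, hfu⟩ :=
        Fintype.exists_ne_map_eq_of_card_lt (fun z : {z : V // z ≠ x} => f z) hbig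
      obtain ⟨π, hπ, hπf⟩ := swap_realize hfull f hzx hwx hzw hfzw u.2 u'.2
        (fun h => hneuu (Subtype.ext h)) hfu
      have hreach : ReachT G n (x, f) (x, f ∘ ⇑(Equiv.swap z w)) := by
        have h1 := hπ f
        have h2 : f ∘ ⇑π = f ∘ ⇑(Equiv.swap z w) := funext hπf
        rwa [h2] at h1
      have hcount' : ∀ β, ((univ : Finset V).filter fun t => t ≠ x ∧ (f ∘ ⇑(Equiv.swap z w)) t = β).card
          = ((univ : Finset V).filter fun t => t ≠ x ∧ g t = β).card := by
        intro β
        have := card_swap_filter (n := n) hzx hwx f β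
        simpa using this.trans (hcount β)
      have hzmem2 : z ∈ (univ : Finset V).filter (fun t => t ≠ x ∧ f t ≠ g t) := by
        simp [hzx, hzfg]
      have hsub2 : (univ : Finset V).filter (fun t => t ≠ x ∧ (f ∘ ⇑(Equiv.swap z w)) t ≠ g t)
          ⊆ ((univ : Finset V).filter (fun t => t ≠ x ∧ f t ≠ g t)).erase z := by
        intro t ht
        rw [Finset.mem_filter] at ht
        obtain ⟨-, htx, htfg⟩ := ht
        simp only [Function.comp_apply] at htfg
        rw [Finset.mem_erase, Finset.mem_filter]
        by_cases htz : t = z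
        · exfalso
          apply htfg
          rw [htz, Equiv.swap_apply_left, hwfz]
        by_cases htw : t = w
        · refine ⟨htz, Finset.mem_univ t, htx, ?_⟩
          rw [htw]
          intro h
          exact hwgz (h ▸ hwfz)
        · refine ⟨htz, Finset.mem_univ t, htx, ?_⟩
          rwa [Equiv.swap_apply_of_ne_of_ne htz htw] at htfg
      have hcard' : ((univ : Finset V).filter
          (fun t => t ≠ x ∧ (f ∘ ⇑(Equiv.swap z w)) t ≠ g t)).card ≤ k := by
        have h1 := Finset.card_le_card hsub2
        rw [Finset.card_erase_of_mem hzmem2] at h1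
        omega
      obtain ⟨g', hg1, hg2⟩ := ih (f ∘ ⇑(Equiv.swap z w)) hcount' hcard'
      exact ⟨g', hreach.trans hg1, hg2⟩

end FourLoop

namespace FourLoop

variable {V : Type*} [DecidableEq V] {G : SimpleGraph V} {n : ℕ}

lemma plaq_chain {c : Fin 4 → V} (hadjc : ∀ i : Fin 4, G.Adj (c i) (c (i + 1)))
    {S : Set V} (hS : ∀ i, c i ∈ S) (i j : Fin 4) :
    Relation.ReflTransGen (fun u w => G.Adj u w ∧ u ∈ S ∧ w ∈ S) (c i) (c j) := by
  set R := fun u w => G.Adj u w ∧ u ∈ S ∧ w ∈ S with hR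
  have hsym : Symmetric R := fun u w h => ⟨h.1.symm, h.2.2, h.2.1⟩
  have hstep : ∀ i : Fin 4, R (c i) (c (i + 1)) := fun i => ⟨hadjc i, hS i, hS (i + 1)⟩
  have r0 : Relation.ReflTransGen R (c 0) (c 0) := Relation.ReflTransGen.refl
  have r1 : Relation.ReflTransGen R (c 0) (c 1) := Relation.ReflTransGen.single (hstep 0)
  have r2 : Relation.ReflTransGen R (c 0) (c 2) := r1.tail (hstep 1)
  have r3 : Relation.ReflTransGen R (c 0) (c 3) := r2.tail (hstep 2)
  have hA : ∀ k : Fin 4, Relation.ReflTransGen R (c 0) (c k) := by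
    intro k
    fin_cases k
    · exact r0
    · exact r1
    · exact r2
    · exact r3
  haveI : Std.Symm R := ⟨fun _ _ h => hsym h⟩
  exact (Std.Symm.symm (r := Relation.ReflTransGen R) _ _ (hA i)).trans (hA j)

lemma plaq_full {c : Fin 4 → V} (hc : Function.Injective c)
    (hadjc : ∀ i : Fin 4, G.Adj (c i) (c (i + 1))) (k : Fin 4) :
    FullAt G n (Set.range c) (c k) := by
  intro a b c' hma hmb hmc hax hbx hcx hab hac hbc
  set d : Fin 4 → V := fun i => c (i + k) with hd
  have hdinj : Function.Injective d := fun i i' h => by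
    have := hc h
    exact add_left_injective k this
  have hdadj : ∀ i : Fin 4, G.Adj (d i) (d (i + 1)) := by
    intro i
    have := hadjc (i + k)
    rw [hd]
    simpa [add_right_comm] using this
  have hbase := plaquette (G := G) (n := n) hdinj hdadj
  have hd0 : d 0 = c k := by rw [hd]; simp
  have hrepr : ∀ {z : V}, z ∈ Set.range c → z ≠ c k → z = d 1 ∨ z = d 2 ∨ z = d 3 := by
    rintro z ⟨i, rfl⟩ hzk
    have hik : i ≠ k := fun h => hzk (congrArg c h)
    have hsub : i - k ≠ 0 := fun h => hik (by
      have := congrArg (· + k) h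
      simpa using this)
    have h3 : i - k = 1 ∨ i - k = 2 ∨ i - k = 3 := by
      revert hsub; revert hik; fin_cases i <;> fin_cases k <;> decide
    have hi : i = (i - k) + k := by simp
    rcases h3 with h | h | h
    · left; rw [hd]; rw [hi, h]
    · right; left; rw [hd]; rw [hi, h]
    · right; right; rw [hd]; rw [hi, h]
  have hd12 : d 1 ≠ d 2 := fun h => by simpa using hdinj h
  have hd13 : d 1 ≠ d 3 := fun h => by simpa using hdinj h
  have hd23 : d 2 ≠ d 3 := fun h => by simpa using hdinj h
  have hcases := cyc_cases hd12 hd13 hd23 (hrepr hma hax) (hrepr hmb hbx) (hrepr hmc hcx)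
    hab hac hbc
  rw [← hd0]
  rcases hcases with h | h
  · rw [h]; exact hbase
  · rw [h, ← cyc_inv hd12 hd13 hd23]
    exact Subgroup.inv_mem _ hbase

end FourLoop

namespace FourLoop

variable {V : Type*} [DecidableEq V] {G : SimpleGraph V} {n : ℕ}

lemma reachT_transport {S : Set V} {x y : V}
    (h : Relation.ReflTransGen (fun u w => G.Adj u w ∧ u ∈ S ∧ w ∈ S) x y) (f : V → Fin n) :
    ∃ g, ReachT G n (x, f) (y, g) := by
  induction h with
  | refl => exact ⟨f, Relation.ReflTransGen.refl⟩
  | @tail p q _ hstep ih =>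
    obtain ⟨g, hg⟩ := ih
    exact ⟨g ∘ ⇑(Equiv.swap p q), hg.trans (reachT_move hstep.1 g)⟩

end FourLoop

namespace FourLoop

variable {V : Type*} [DecidableEq V] [Fintype V] {G : SimpleGraph V} {n : ℕ}

/-- Projection from the total model to hole-configurations. -/
def projIdx (s : V × (V → Fin n)) : HoleIndex V n := ⟨s.1, fun z => s.2 z⟩

lemma project {s t : V × (V → Fin n)} (h : ReachT G n s t) :
    Relation.ReflTransGen
      (fun p q : HoleIndex V n =>
        ∃ h : G.Adj p.1 q.1, q.2 = moveConf p.1 q.1 h.ne p.2) (projIdx s) (projIdx t) := by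
  refine Relation.ReflTransGen.lift (r := tstep G n) projIdx ?_ s t h
  rintro ⟨x, f⟩ ⟨y, g⟩ ⟨hadj, hg⟩
  dsimp only at hadj hg
  refine ⟨hadj, ?_⟩
  subst hg
  funext z
  show f (Equiv.swap x y z) = moveConf x y hadj.ne (fun z => f z) z
  unfold moveConf
  by_cases hzx : (z : V) = x
  · rw [dif_pos hzx, hzx, Equiv.swap_apply_left]
  · have hzy : (z : V) ≠ y := z.2
    rw [dif_neg hzx, Equiv.swap_apply_of_ne_of_ne hzx hzy]

lemma flavorCount_eq (x : V) (f : V → Fin n) (β : Fin n) :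
    flavorCount (⟨x, fun z => f z⟩ : HoleIndex V n) β
      = ((univ : Finset V).filter fun w => w ≠ x ∧ f w = β).card := by
  unfold flavorCount
  apply Finset.card_bij (fun (z : {z : V // z ≠ x}) _ => (z : V))
  · intro z hz
    simp only [Finset.mem_filter, Finset.mem_univ, true_and] at hz ⊢
    exact ⟨z.2, hz⟩
  · intro z _ z' _ h
    exact Subtype.ext h
  · intro w hw
    simp only [Finset.mem_filter, Finset.mem_univ, true_and] at hw
    exact ⟨⟨w, hw.1⟩, by simp [hw.2], rfl⟩

end FourLoop

open FourLoop in
/-- Connectivity condition for lattices built from 4-loops: if the lattice `G`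
is obtained by successively gluing 4-cycles `C 0, C 1, …`, each new 4-cycle
sharing at least one edge with the union of the previous ones and at most one
edge with each individual previous one, and if there are at least `n + 2`
sites, then the SU(n) one-hole model satisfies the connectivity condition:
any two basis indices `(x, α)` and `(x', α')` with the same flavor
multiplicities are connected by a sequence of elementary hole moves. -/
theorem four_loop_lattice_connectivity
    {V : Type*} [Fintype V] [DecidableEq V] (G : SimpleGraph V)
    (n : ℕ) [NeZero n]
    (L : ℕ) (hL : 0 < L) (C : Fin L → (Fin 4 → V))
    (hinj : ∀ l, Function.Injective (C l))
    (hadj : ∀ l (i : Fin 4), G.Adj (C l i) (C l (i + 1)))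
    (hedges : G.edgeSet = ⋃ l, cycEdges (C l))
    (hcover : (Set.univ : Set V) = ⋃ l, Set.range (C l))
    (hglue : ∀ l : Fin L, 0 < (l : ℕ) →
      ∃ e, e ∈ cycEdges (C l) ∧ ∃ l' : Fin L, (l' : ℕ) < (l : ℕ) ∧ e ∈ cycEdges (C l'))
    (hshare : ∀ l l' : Fin L, (l' : ℕ) < (l : ℕ) →
      Set.Subsingleton (cycEdges (C l) ∩ cycEdges (C l')))
    (hcard : n + 2 ≤ Fintype.card V) :
    ∀ a b : HoleIndex V n, flavorCount a = flavorCount b →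
      Relation.ReflTransGen
        (fun p q : HoleIndex V n =>
          ∃ h : G.Adj p.1 q.1, q.2 = moveConf p.1 q.1 h.ne p.2) a b := by
  
  classical
  intro a b hcount
  let l0 : Fin L := ⟨0, hL⟩
  set W : ℕ → Set V := fun m => ⋃ (l : Fin L) (_ : (l : ℕ) ≤ m), Set.range (C l) with hWdef
  have hWmem : ∀ {l : Fin L} {m : ℕ}, (l : ℕ) ≤ m → Set.range (C l) ⊆ W m := by
    intro l m hlm z hz
    exact Set.mem_iUnion.mpr ⟨l, Set.mem_iUnion.mpr ⟨hlm, hz⟩⟩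
  have hWel : ∀ {z : V} {m : ℕ}, z ∈ W m → ∃ l : Fin L, (l : ℕ) ≤ m ∧ z ∈ Set.range (C l) := by
    intro z m hz
    rcases Set.mem_iUnion.mp hz with ⟨l, hz⟩
    rcases Set.mem_iUnion.mp hz with ⟨hlm, hz⟩
    exact ⟨l, hlm, hz⟩
  have hWmono : ∀ {m m' : ℕ}, m ≤ m' → W m ⊆ W m' := by
    intro m m' h z hz
    obtain ⟨l, hlm, hr⟩ := hWel hz
    exact hWmem (hlm.trans h) hr
  set RTC := fun (S : Set V) => Relation.ReflTransGen (fun u w : V => G.Adj u w ∧ u ∈ S ∧ w ∈ S)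
    with hRTCdef
  have hRTCmono : ∀ {S S' : Set V}, S ⊆ S' → ∀ {x y : V}, RTC S x y → RTC S' x y :=
    fun {S S'} hss {x y} h => Relation.ReflTransGen.mono
      (r := fun u w : V => G.Adj u w ∧ u ∈ S ∧ w ∈ S) (p := fun u w : V => G.Adj u w ∧ u ∈ S' ∧ w ∈ S')
      (fun u w h => ⟨h.1, hss h.2.1, hss h.2.2⟩) x y h
  have hRTCsymm : ∀ {S : Set V} {x y : V}, RTC S x y → RTC S y x := by
    intro S x y h
    haveI : Std.Symm (fun u w : V => G.Adj u w ∧ u ∈ S ∧ w ∈ S) := ⟨fun u w hw => ⟨hw.1.symm, hw.2.2, hw.2.1⟩⟩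
    exact Std.Symm.symm (r := Relation.ReflTransGen (fun u w : V => G.Adj u w ∧ u ∈ S ∧ w ∈ S)) _ _ h
  have key : ∀ m : ℕ, (∀ x ∈ W m, RTC (W m) (C l0 0) x) ∧ (∀ x ∈ W m, FullAt G n (W m) x) := by
    intro m
    induction m with
    | zero =>
      have hW0 : W 0 = Set.range (C l0) := by
        apply Set.Subset.antisymm
        · intro z hz
          obtain ⟨l, hl, hz⟩ := hWel hz
          have hleq : l = l0 := Fin.ext (Nat.le_zero.mp hl)
          rwa [hleq] at hz
        · exact hWmem (by simp [l0])
      constructor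
      · intro x hx
        rw [hW0] at hx
        obtain ⟨i, rfl⟩ := hx
        exact plaq_chain (hadj l0) (fun i => hWmem (by simp [l0]) ⟨i, rfl⟩) 0 i
      · intro x hx
        rw [hW0] at hx
        obtain ⟨i, rfl⟩ := hx
        rw [hW0]
        exact plaq_full (hinj l0) (hadj l0) i
    | succ m ih =>
      by_cases hLm : m + 1 < L
      · set l : Fin L := ⟨m + 1, hLm⟩ with hldef
        obtain ⟨e, he1, l', hl'lt, he2⟩ := hglue l (by simp [hldef])
        obtain ⟨j, rfl⟩ := he1
        obtain ⟨i', hei⟩ := he2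
        have hl'm : (l' : ℕ) ≤ m := by
          have : (l' : ℕ) < m + 1 := by simpa [hldef] using hl'lt
          omega
        have huv : C l j ∈ W m ∧ C l (j + 1) ∈ W m := by
          rcases Sym2.eq_iff.mp hei with ⟨h1, h2⟩ | ⟨h1, h2⟩
          · exact ⟨hWmem hl'm ⟨i', h1.symm⟩, hWmem hl'm ⟨i' + 1, h2.symm⟩⟩
          · exact ⟨hWmem hl'm ⟨i' + 1, h1.symm⟩, hWmem hl'm ⟨i', h2.symm⟩⟩
        set d : Fin 4 → V := fun i => C l (i + j) with hddef
        have hd0 : d 0 = C l j := by simp [hddef]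
        have hd1 : d 1 = C l (j + 1) := by rw [hddef]; simp [add_comm]
        have hdinj : Function.Injective d := fun p q h => add_left_injective j (hinj l h)
        have hdadj : ∀ i : Fin 4, G.Adj (d i) (d (i + 1)) := by
          intro i
          have := hadj l (i + j)
          rw [hddef]
          simpa [add_right_comm] using this
        have hu : d 0 ∈ W m := hd0 ▸ huv.1
        have hvW : d 1 ∈ W m := hd1 ▸ huv.2
        have hfull_u : FullAt G n (W m) (d 0) := ih.2 (d 0) hu
        have hO3 : ∀ s t : V, ∃ w, w ∈ {z : V | z ∈ W m ∧ z ≠ d 0} ∧ w ≠ s ∧ w ≠ t := by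
          intro s t
          obtain ⟨i, h1, h2, h3⟩ := pick4 (hinj l0) (d 0) s t
          exact ⟨C l0 i, ⟨hWmem (by simp [l0]) ⟨i, rfl⟩, h1⟩, h2, h3⟩
        have hgen := gen (avail G n (d 0)) {z : V | z ∈ W m ∧ z ≠ d 0} (d 1) (d 2) (d 3)
          ⟨hvW, fun h => by simpa using hdinj h⟩
          (fun h => by simpa using hdinj h)
          (fun h => by simpa using hdinj h)
          (fun h => by simpa using hdinj h)
          hO3
          (fun a' b' c' ha' hb' hc' hab hac hbc =>
            hfull_u a' b' c' ha'.1 hb'.1 hc'.1 ha'.2 hb'.2 hc'.2 hab hac hbc)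
          (plaquette hdinj hdadj)
        have hWsucc : ∀ z ∈ W (m + 1), z ∈ W m ∨ z ∈ Set.range d := by
          intro z hz
          obtain ⟨l'', hl'', hr⟩ := hWel hz
          by_cases hcase : (l'' : ℕ) ≤ m
          · exact Or.inl (hWmem hcase hr)
          · have hll : l'' = l := Fin.ext (by simp [hldef]; omega)
            rw [hll] at hr
            right
            obtain ⟨i, rfl⟩ := hr
            exact ⟨i - j, by rw [hddef]; simp⟩
        have hWsub : Set.range d ⊆ W (m + 1) := by
          rintro z ⟨i, rfl⟩
          exact hWmem (by simp [hldef]) ⟨i + j, rfl⟩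
        have hWmsub : W m ⊆ W (m + 1) := hWmono (Nat.le_succ m)
        have hfullnew : FullAt G n (W (m + 1)) (d 0) := by
          intro a' b' c' ha' hb' hc' hax hbx hcx hab hac hbc
          have hmap : ∀ {z : V}, z ∈ W (m + 1) → z ≠ d 0 →
              z ∈ {z : V | z ∈ W m ∧ z ≠ d 0} ∪ {d 2, d 3} := by
            intro z hz hzu
            rcases hWsucc z hz with h | h
            · exact Or.inl ⟨h, hzu⟩
            · obtain ⟨i, rfl⟩ := h
              fin_cases i
              · exact absurd rfl hzu
              · exact Or.inl ⟨hvW, hzu⟩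
              · exact Or.inr (Or.inl rfl)
              · exact Or.inr (Or.inr rfl)
          exact hgen a' b' c' (hmap ha' hax) (hmap hb' hbx) (hmap hc' hcx) hab hac hbc
        have hconn : ∀ x ∈ W (m + 1), RTC (W (m + 1)) (C l0 0) x := by
          intro x hx
          rcases hWsucc x hx with h | h
          · exact hRTCmono hWmsub (ih.1 x h)
          · obtain ⟨i, rfl⟩ := h
            have h1 : RTC (W (m + 1)) (C l0 0) (d 0) := hRTCmono hWmsub (ih.1 (d 0) hu)
            exact h1.trans (plaq_chain hdadj (fun i => hWsub ⟨i, rfl⟩) 0 i)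
        refine ⟨hconn, ?_⟩
        intro x hx
        have hpath : RTC (W (m + 1)) (d 0) x :=
          (hRTCsymm (hconn (d 0) (hWmsub hu))).trans (hconn x hx)
        exact fullAt_walk hpath hfullnew
      · have hWeq : W (m + 1) = W m := by
          apply Set.Subset.antisymm
          · intro z hz
            obtain ⟨l, hl, hr⟩ := hWel hz
            have hlm : (l : ℕ) ≤ m := by have := l.2; omega
            exact hWmem hlm hr
          · exact hWmono (Nat.le_succ m)
        rw [hWeq]
        exact ih
  have hWL : ∀ z : V, z ∈ W L := by
    intro z
    have hz : z ∈ ⋃ l, Set.range (C l) := hcover ▸ Set.mem_univ z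
    obtain ⟨l, hl⟩ := Set.mem_iUnion.mp hz
    exact hWmem (le_of_lt l.2) hl
  have hfull_all : ∀ x a' b' c' : V, a' ≠ x → b' ≠ x → c' ≠ x →
      a' ≠ b' → a' ≠ c' → b' ≠ c' → cyc a' b' c' ∈ avail G n x := by
    intro x a' b' c' h1 h2 h3 h4 h5 h6
    exact (key L).2 x (hWL x) a' b' c' (hWL a') (hWL b') (hWL c') h1 h2 h3 h4 h5 h6
  have hconn_all : ∀ x y : V, RTC (W L) x y := by
    intro x y
    exact (hRTCsymm ((key L).1 x (hWL x))).trans ((key L).1 y (hWL y))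
  -- extensions of the two configurations to total functions
  let f0 : V → Fin n := fun v => if h : v = a.1 then default else a.2 ⟨v, h⟩
  let g0 : V → Fin n := fun v => if h : v = b.1 then default else b.2 ⟨v, h⟩
  have haeq : projIdx (a.1, f0) = a := by
    show (⟨a.1, fun z => f0 z⟩ : HoleIndex V n) = a
    have : (fun z : {z : V // z ≠ a.1} => f0 z) = a.2 := by
      funext z
      exact dif_neg z.2
    rw [this]
  have hgeq : ∀ z : {z : V // z ≠ b.1}, g0 z = b.2 z := fun z => dif_neg z.2
  -- transport the hole to b.1
  obtain ⟨f1, hT⟩ := reachT_transport (hconn_all a.1 b.1) f0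
  -- counts
  have hca : ∀ β, ((univ : Finset V).filter fun w => w ≠ a.1 ∧ f0 w = β).card
      = flavorCount a β := by
    intro β
    rw [← haeq]
    exact (flavorCount_eq a.1 f0 β).symm
  have hcb : ∀ β, ((univ : Finset V).filter fun w => w ≠ b.1 ∧ g0 w = β).card
      = flavorCount b β := by
    intro β
    have : flavorCount (⟨b.1, fun z => g0 z⟩ : HoleIndex V n) β = flavorCount b β := by
      have h2 : (fun z : {z : V // z ≠ b.1} => g0 z) = b.2 := funext hgeq
      rw [h2]
    rw [← this]
    exact (flavorCount_eq b.1 g0 β).symm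
  have hc2 : ∀ β, ((univ : Finset V).filter fun w => w ≠ b.1 ∧ f1 w = β).card
      = ((univ : Finset V).filter fun w => w ≠ b.1 ∧ g0 w = β).card := by
    intro β
    have h1 := reachT_count hT β
    simp only at h1
    rw [← h1, hca, hcount, ← hcb]
  have hbig : Fintype.card (Fin n) < Fintype.card {z : V // z ≠ b.1} := by
    have h1 : Fintype.card {z : V // z ≠ b.1} = Fintype.card V - 1 := by
      have := Fintype.card_subtype_compl (fun z : V => z = b.1)
      simp only [Fintype.card_subtype_eq] at this
      convert this using 2
    rw [Fintype.card_fin, h1]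
    omega
  obtain ⟨g', hg1, hg2⟩ := endgame (hfull_all b.1) hbig g0
    (((univ : Finset V).filter fun w => w ≠ b.1 ∧ f1 w ≠ g0 w).card) f1 hc2 (le_refl _)
  have hfinal : ReachT G n (a.1, f0) (b.1, g') := hT.trans hg1
  have hproj := project hfinal
  have hbeq : projIdx (b.1, g') = b := by
    show (⟨b.1, fun z => g' z⟩ : HoleIndex V n) = b
    have : (fun z : {z : V // z ≠ b.1} => g' z) = b.2 := by
      funext z
      rw [hg2 z z.2]
      exact hgeq z
    rw [this]
  rwa [haeq, hbeq] at hproj
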